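/- arXiv:2406.16401 — 4 statements merged into one kernel-verified Lean document; each statement's English description precedes it below -/
import Mathlib

section
/- For every permutation σ of {1,…,n}, the depth of σ, defined as the minimum over all factorizations σ = (i₁ j₁)(i₂ j₂)⋯(i_k j_k) into transpositions of the sum Σ_{r=1}^{k}(j_r − i_r), equals Σ_{i : σ(i) > i} (σ(i) − i). -/
open Finset

private def pdepth {n : ℕ} (σ : Equiv.Perm (Fin n)) : ℕ := ∑ i, ((σ i : ℕ) - (i : ℕ))

private lemma pdepth_one {n : ℕ} : pdepth (1 : Equiv.Perm (Fin n)) = 0 := by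
  simp [pdepth]

private lemma swap_sum {n : ℕ} {a b : Fin n} (hab : a < b) :
    ∑ k : Fin n, ((Equiv.swap a b k : ℕ) - (k : ℕ)) = (b : ℕ) - (a : ℕ) := by
  have h : ∀ k : Fin n, ((Equiv.swap a b k : ℕ) - (k : ℕ)) =
      if k = a then (b : ℕ) - (a : ℕ) else 0 := by
    intro k
    rcases eq_or_ne k a with rfl | h1
    · simp [Equiv.swap_apply_left]
    · rcases eq_or_ne k b with rfl | h2
      · have : (a : ℕ) ≤ (k : ℕ) := le_of_lt hab
        simp [Equiv.swap_apply_right, h1, Nat.sub_eq_zero_of_le this]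
      · simp [Equiv.swap_apply_of_ne_of_ne h1 h2, h1]
  simp_rw [h]
  simp

private lemma pdepth_mul_le {n : ℕ} (s τ : Equiv.Perm (Fin n)) :
    pdepth (s * τ) ≤ (∑ k : Fin n, ((s k : ℕ) - (k : ℕ))) + pdepth τ := by
  unfold pdepth
  calc ∑ i : Fin n, ((s (τ i) : ℕ) - (i : ℕ))
      ≤ ∑ i : Fin n, (((s (τ i) : ℕ) - (τ i : ℕ)) + ((τ i : ℕ) - (i : ℕ))) := by
        apply Finset.sum_le_sum
        intro i _
        omega
    _ = (∑ i : Fin n, ((s (τ i) : ℕ) - (τ i : ℕ))) + ∑ i : Fin n, ((τ i : ℕ) - (i : ℕ)) := by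
        rw [Finset.sum_add_distrib]
    _ = (∑ k : Fin n, ((s k : ℕ) - (k : ℕ))) + ∑ i : Fin n, ((τ i : ℕ) - (i : ℕ)) := by
        rw [Equiv.sum_comp τ (fun k => (s k : ℕ) - (k : ℕ))]

private lemma pdepth_lower {n : ℕ} :
    ∀ L : List (Fin n × Fin n), (∀ p ∈ L, p.1 < p.2) →
      pdepth ((L.map fun p => Equiv.swap p.1 p.2).prod) ≤
        (L.map fun p => (p.2 : ℕ) - (p.1 : ℕ)).sum := by
  intro L
  induction L with
  | nil => intro _; simp [pdepth_one]
  | cons p L ih =>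
    intro h
    simp only [List.map_cons, List.prod_cons, List.sum_cons]
    calc pdepth (Equiv.swap p.1 p.2 * (L.map fun p => Equiv.swap p.1 p.2).prod)
        ≤ (∑ k : Fin n, ((Equiv.swap p.1 p.2 k : ℕ) - (k : ℕ))) +
            pdepth ((L.map fun p => Equiv.swap p.1 p.2).prod) := pdepth_mul_le _ _
      _ ≤ ((p.2 : ℕ) - (p.1 : ℕ)) + (L.map fun p => (p.2 : ℕ) - (p.1 : ℕ)).sum := by
          have h1 := swap_sum (h p List.mem_cons_self)
          have h2 := ih (fun q hq => h q (List.mem_cons_of_mem p hq))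
          omega

private lemma perm_eq_one_of_le {n : ℕ} {σ : Equiv.Perm (Fin n)}
    (h : ∀ i : Fin n, σ i ≤ i) : σ = 1 := by
  have key : ∀ m : ℕ, ∀ i : Fin n, (i : ℕ) = m → σ i = i := by
    intro m
    induction m using Nat.strong_induction_on with
    | _ m IH =>
      intro i him
      by_contra hne
      have hlt : σ i < i := lt_of_le_of_ne (h i) hne
      have hfix : σ (σ i) = σ i := IH (σ i) (by omega) (σ i) rfl
      exact hne (σ.injective hfix)
  ext i
  exact congrArg Fin.val (key (i : ℕ) i rfl)

private lemma exists_factorization {n : ℕ} :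
    ∀ N : ℕ, ∀ σ : Equiv.Perm (Fin n), pdepth σ ≤ N →
      ∃ L : List (Fin n × Fin n), (∀ p ∈ L, p.1 < p.2) ∧
        σ = (L.map fun p => Equiv.swap p.1 p.2).prod ∧
        (L.map fun p => (p.2 : ℕ) - (p.1 : ℕ)).sum = pdepth σ := by
  intro N
  induction N with
  | zero =>
    intro σ hσ
    have h0 : pdepth σ = 0 := Nat.le_zero.mp hσ
    have hle : ∀ i : Fin n, σ i ≤ i := by
      intro i
      have := Finset.sum_eq_zero_iff.mp h0 i (Finset.mem_univ i)
      have : (σ i : ℕ) ≤ (i : ℕ) := by omega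
      exact this
    refine ⟨[], by simp, ?_, by simp [perm_eq_one_of_le hle, pdepth_one]⟩
    simp [perm_eq_one_of_le hle]
  | succ N ih =>
    intro σ hσ
    by_cases hid : ∀ i : Fin n, σ i ≤ i
    · refine ⟨[], by simp, ?_, by simp [perm_eq_one_of_le hid, pdepth_one]⟩
      simp [perm_eq_one_of_le hid]
    · push_neg at hid
      -- there is i with i < σ i; pick a maximizing σ a on that set
      have hS : (Finset.univ.filter (fun i : Fin n => i < σ i)).Nonempty := by
        obtain ⟨i, hi⟩ := hid
        exact ⟨i, by simp [hi]⟩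
      obtain ⟨a, haS, hamax⟩ := Finset.exists_max_image
        (Finset.univ.filter (fun i : Fin n => i < σ i)) σ hS
      have ha : a < σ a := by simpa using haS
      -- find b with a < b ≤ σ a and σ b ≤ a
      have hb : ∃ b : Fin n, a < b ∧ b ≤ σ a ∧ σ b ≤ a := by
        by_contra hcon
        push_neg at hcon
        have himg : (Finset.Ioc a (σ a)).image σ ⊆ (Finset.Ioc a (σ a)).erase (σ a) := by
          intro v hv
          obtain ⟨b, hbmem, rfl⟩ := Finset.mem_image.mp hv
          rw [Finset.mem_Ioc] at hbmem
          have h1 : a < σ b := hcon b hbmem.1 hbmem.2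
          have h2 : σ b ≤ σ a := by
            by_contra h2
            push_neg at h2
            have hbS : b ∈ Finset.univ.filter (fun i : Fin n => i < σ i) := by
              simp only [Finset.mem_filter, Finset.mem_univ, true_and]
              exact lt_of_le_of_lt hbmem.2 h2
            exact absurd (hamax b hbS) (not_le.mpr h2)
          have hne : σ b ≠ σ a := by
            intro h
            have : b = a := σ.injective h
            exact absurd hbmem.1 (by simp [this])
          exact Finset.mem_erase.mpr ⟨hne, Finset.mem_Ioc.mpr ⟨h1, h2⟩⟩
        have hcard1 : ((Finset.Ioc a (σ a)).image σ).card = (Finset.Ioc a (σ a)).card :=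
          Finset.card_image_of_injective _ σ.injective
        have hmemM : σ a ∈ Finset.Ioc a (σ a) := Finset.mem_Ioc.mpr ⟨ha, le_refl _⟩
        have hcard2 : ((Finset.Ioc a (σ a)).erase (σ a)).card =
            (Finset.Ioc a (σ a)).card - 1 := Finset.card_erase_of_mem hmemM
        have hcard3 := Finset.card_le_card himg
        have hpos : 1 ≤ (Finset.Ioc a (σ a)).card := Finset.card_pos.mpr ⟨_, hmemM⟩
        omega
      obtain ⟨b, hab, hbM, hba⟩ := hb
      set σ' := σ * Equiv.swap a b with hσ'
      -- pdepth σ = pdepth σ' + (b - a)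
      have hkey : pdepth σ = pdepth σ' + ((b : ℕ) - (a : ℕ)) := by
        have hpoint : ∀ i : Fin n,
            ((σ i : ℕ) - (i : ℕ)) + (if i = b then (σ a : ℕ) - (b : ℕ) else 0) =
            ((σ' i : ℕ) - (i : ℕ)) + (if i = a then (σ a : ℕ) - (a : ℕ) else 0) := by
          intro i
          have hab' : (a : ℕ) < (b : ℕ) := hab
          have hbM' : (b : ℕ) ≤ (σ a : ℕ) := hbM
          have hba' : (σ b : ℕ) ≤ (a : ℕ) := hba
          rcases eq_or_ne i a with rfl | h1
          · have hia : i ≠ b := ne_of_lt hab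
            have e1 : σ' i = σ b := by
              simp [hσ', Equiv.swap_apply_left]
            rw [if_neg hia, if_pos rfl, e1]
            omega
          · rcases eq_or_ne i b with rfl | h2
            · have e1 : σ' i = σ a := by
                simp [hσ', Equiv.swap_apply_right]
              rw [if_pos rfl, if_neg h1, e1]
              omega
            · have e1 : σ' i = σ i := by
                simp [hσ', Equiv.swap_apply_of_ne_of_ne h1 h2]
              rw [if_neg h1, if_neg h2, e1]
        have hsum := Finset.sum_congr rfl (fun i (_ : i ∈ Finset.univ) => hpoint i)
        rw [Finset.sum_add_distrib, Finset.sum_add_distrib] at hsum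
        simp only [Finset.sum_ite_eq', Finset.mem_univ, if_pos] at hsum
        have hab' : (a : ℕ) < (b : ℕ) := hab
        have hbM' : (b : ℕ) ≤ (σ a : ℕ) := hbM
        have h1 : pdepth σ + ((σ a : ℕ) - (b : ℕ)) =
            pdepth σ' + ((σ a : ℕ) - (a : ℕ)) := hsum
        omega
      have hba1 : 1 ≤ (b : ℕ) - (a : ℕ) := by
        have : (a : ℕ) < (b : ℕ) := hab
        omega
      have hσ'le : pdepth σ' ≤ N := by omega
      obtain ⟨L', hL'1, hL'2, hL'3⟩ := ih σ' hσ'le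
      refine ⟨L' ++ [(a, b)], ?_, ?_, ?_⟩
      · intro p hp
        rcases List.mem_append.mp hp with h | h
        · exact hL'1 p h
        · simp at h; subst h; exact hab
      · rw [List.map_append, List.prod_append]
        simp only [List.map_cons, List.map_nil, List.prod_cons, List.prod_nil, mul_one]
        rw [← hL'2]
        rw [hσ']
        rw [mul_assoc, Equiv.swap_mul_self, mul_one]
      · rw [List.map_append, List.sum_append]
        simp only [List.map_cons, List.map_nil, List.sum_cons, List.sum_nil, add_zero]
        omega

private lemma pdepth_eq_filter {n : ℕ} (σ : Equiv.Perm (Fin n)) :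
    pdepth σ = ∑ i ∈ Finset.univ.filter (fun i : Fin n => i < σ i), ((σ i : ℕ) - (i : ℕ)) := by
  unfold pdepth
  rw [← Finset.sum_filter_add_sum_filter_not Finset.univ (fun i : Fin n => i < σ i)]
  have : ∑ i ∈ Finset.univ.filter (fun i : Fin n => ¬ i < σ i), ((σ i : ℕ) - (i : ℕ)) = 0 := by
    apply Finset.sum_eq_zero
    intro i hi
    simp only [Finset.mem_filter, not_lt] at hi
    have : (σ i : ℕ) ≤ (i : ℕ) := hi.2
    omega
  omega

/-- The depth of a permutation of `Fin n`, defined as the minimum cost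
`∑ (j_r - i_r)` over all factorizations into transpositions `(i_r j_r)` with
`i_r < j_r`, equals `∑_{i : σ i > i} (σ i - i)`. -/
theorem depth_formula {n : ℕ} (σ : Equiv.Perm (Fin n)) :
    sInf {c : ℕ | ∃ L : List (Fin n × Fin n),
        (∀ p ∈ L, p.1 < p.2) ∧
        σ = (L.map fun p => Equiv.swap p.1 p.2).prod ∧
        c = (L.map fun p => (p.2 : ℕ) - (p.1 : ℕ)).sum} =
    ∑ i ∈ Finset.univ.filter (fun i : Fin n => i < σ i), ((σ i : ℕ) - (i : ℕ)) := by
  rw [← pdepth_eq_filter]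
  obtain ⟨L, hL1, hL2, hL3⟩ := exists_factorization (pdepth σ) σ le_rfl
  have hmem : pdepth σ ∈ {c : ℕ | ∃ L : List (Fin n × Fin n),
      (∀ p ∈ L, p.1 < p.2) ∧
      σ = (L.map fun p => Equiv.swap p.1 p.2).prod ∧
      c = (L.map fun p => (p.2 : ℕ) - (p.1 : ℕ)).sum} := ⟨L, hL1, hL2, hL3.symm⟩
  apply le_antisymm
  · exact Nat.sInf_le hmem
  · apply le_csInf ⟨_, hmem⟩
    rintro c ⟨L', hL'1, hL'2, hL'3⟩
    rw [hL'3, hL'2]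
    exact pdepth_lower L' hL'1
end

section
/- For every n ≥ 1, Σ_{σ ∈ 𝔖_n} (−1)^{inv(σ)} s^{exc(σ)} t^{depth(σ)} = (1 − st)^{n−1} as polynomials in s and t. -/
/-- Number of excedances of a permutation. -/
def excN {n : ℕ} (σ : Equiv.Perm (Fin n)) : ℕ :=
  (Finset.univ.filter fun i : Fin n => i < σ i).card

/-- Depth of a permutation: `∑_{i : σ i > i} (σ i - i)`. -/
def depthN {n : ℕ} (σ : Equiv.Perm (Fin n)) : ℕ :=
  ∑ i ∈ Finset.univ.filter (fun i : Fin n => i < σ i), ((σ i : ℕ) - (i : ℕ))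

/-- Number of inversions of a permutation. -/
def invN {n : ℕ} (σ : Equiv.Perm (Fin n)) : ℕ :=
  (Finset.univ.filter fun p : Fin n × Fin n => p.1 < p.2 ∧ σ p.2 < σ p.1).card

open Finset Equiv Equiv.Perm MvPolynomial Matrix

lemma signAux_eq_pow_invN {n : ℕ} (σ : Equiv.Perm (Fin n)) :
    Equiv.Perm.signAux σ = (-1 : ℤˣ) ^ invN σ := by
  have h1 : Equiv.Perm.signAux σ =
      (-1 : ℤˣ) ^ ((Equiv.Perm.finPairsLT n).filter
        (fun x => σ x.1 ≤ σ x.2)).card := by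
    unfold Equiv.Perm.signAux
    rw [Finset.card_filter]
    rw [← Finset.prod_pow_eq_pow_sum]
    refine Finset.prod_congr rfl fun x _ => ?_
    split_ifs <;> simp
  rw [h1]
  congr 1
  unfold invN
  apply Finset.card_bij' (fun x _ => ((x.2, x.1) : Fin n × Fin n))
    (fun p _ => (⟨p.2, p.1⟩ : Σ _ : Fin n, Fin n))
  · intro x hx
    rw [Finset.mem_filter] at hx
    obtain ⟨hmem, hle⟩ := hx
    rw [Equiv.Perm.mem_finPairsLT] at hmem
    rw [Finset.mem_filter]
    refine ⟨Finset.mem_univ _, hmem, ?_⟩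
    rcases lt_or_eq_of_le hle with h | h
    · exact h
    · exact absurd (σ.injective h) (ne_of_gt hmem)
  · intro p hp
    rw [Finset.mem_filter] at hp
    obtain ⟨-, h1, h2⟩ := hp
    rw [Finset.mem_filter, Equiv.Perm.mem_finPairsLT]
    exact ⟨h1, le_of_lt h2⟩
  · intro x _; rfl
  · intro p _; rfl

lemma sign_eq_pow_invN {n : ℕ} (σ : Equiv.Perm (Fin n)) :
    Equiv.Perm.sign σ = (-1 : ℤˣ) ^ invN σ := by
  rcases le_or_gt n 1 with h | h
  · have hsub : Subsingleton (Fin n) :=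
      ⟨fun a b => Fin.ext (by have ha := a.isLt; have hb := b.isLt; omega)⟩
    have hσ : σ = 1 := Equiv.ext fun x => Subsingleton.elim _ _
    subst hσ
    have hinv : invN (1 : Equiv.Perm (Fin n)) = 0 := by
      unfold invN
      rw [Finset.card_eq_zero]
      rw [Finset.filter_eq_empty_iff]
      rintro p -
      simp only [Equiv.Perm.one_apply]
      rintro ⟨h1, h2⟩
      exact absurd h2 (not_lt.2 (le_of_lt h1))
    rw [hinv]
    simp
  · have hs : Function.Surjective
        (MonoidHom.mk' Equiv.Perm.signAux Equiv.Perm.signAux_mul :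
          Equiv.Perm (Fin n) →* ℤˣ) := by
      intro u
      rcases Int.units_eq_one_or u with rfl | rfl
      · exact ⟨1, Equiv.Perm.signAux_one n⟩
      · refine ⟨Equiv.swap ⟨0, by omega⟩ ⟨1, by omega⟩, ?_⟩
        exact Equiv.Perm.signAux_swap (by simp [Fin.ext_iff])
    have := Equiv.Perm.eq_sign_of_surjective_hom hs
    have hσ : Equiv.Perm.sign σ = Equiv.Perm.signAux σ := by
      rw [← this]; rfl
    rw [hσ, signAux_eq_pow_invN]

/-- The matrix whose determinant is the signed excedance-depth sum. -/
noncomputable def Mmat (n : ℕ) : Matrix (Fin n) (Fin n) (MvPolynomial (Fin 2) ℤ) :=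
  fun i j => if (i : ℕ) < (j : ℕ) then X 0 * X 1 ^ ((j : ℕ) - (i : ℕ)) else 1

lemma sum_eq_det (n : ℕ) :
    ∑ σ : Equiv.Perm (Fin n),
        (C ((-1 : ℤ) ^ invN σ) * X 0 ^ excN σ * X 1 ^ depthN σ :
          MvPolynomial (Fin 2) ℤ) = (Mmat n)ᵀ.det := by
  rw [Matrix.det_apply']
  refine Finset.sum_congr rfl fun σ _ => ?_
  have hprod : ∏ i : Fin n, (Mmat n)ᵀ (σ i) i
      = X 0 ^ excN σ * X 1 ^ depthN σ := by
    have : ∀ i : Fin n, (Mmat n)ᵀ (σ i) i = Mmat n i (σ i) := fun i => rfl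
    simp only [this]
    rw [← Finset.prod_filter_mul_prod_filter_not Finset.univ (fun i => i < σ i)]
    have h2 : ∏ i ∈ Finset.univ.filter (fun i : Fin n => ¬ i < σ i),
        Mmat n i (σ i) = 1 := by
      refine Finset.prod_eq_one fun i hi => ?_
      rw [Finset.mem_filter] at hi
      simp only [Mmat]
      rw [if_neg (show ¬ (i:ℕ) < ((σ i:Fin n):ℕ) from fun h => hi.2 h)]
    have h1 : ∏ i ∈ Finset.univ.filter (fun i : Fin n => i < σ i),
        Mmat n i (σ i)
        = ∏ i ∈ Finset.univ.filter (fun i : Fin n => i < σ i),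
            (X 0 * X 1 ^ ((σ i : ℕ) - (i : ℕ)) : MvPolynomial (Fin 2) ℤ) := by
      refine Finset.prod_congr rfl fun i hi => ?_
      rw [Finset.mem_filter] at hi
      simp only [Mmat]
      rw [if_pos (show (i:ℕ) < ((σ i:Fin n):ℕ) from hi.2)]
    rw [h2, h1, mul_one, Finset.prod_mul_distrib, Finset.prod_const,
      Finset.prod_pow_eq_pow_sum]
    rfl
  rw [hprod, sign_eq_pow_invN]
  rw [mul_assoc]
  congr 1

lemma det_Mmat (m : ℕ) :
    (Mmat (m + 1)).det = (1 - X 0 * X 1 : MvPolynomial (Fin 2) ℤ) ^ m := by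
  set B : Matrix (Fin (m + 1)) (Fin (m + 1)) (MvPolynomial (Fin 2) ℤ) :=
    fun i j => Fin.cases (Mmat (m + 1) 0 j)
      (fun i' => Mmat (m + 1) i'.succ j - Mmat (m + 1) i'.castSucc j) i with hB
  have hdet : (Mmat (m + 1)).det = B.det := by
    refine Matrix.det_eq_of_forall_row_eq_smul_add_pred (fun _ => 1) (fun j => ?_)
      (fun i j => ?_)
    · simp [hB]
    · simp only [hB, Fin.cases_succ]
      ring
  have htri : B.BlockTriangular id := by
    intro i j hij
    simp only [id] at hij
    induction i using Fin.cases with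
    | zero => simp at hij
    | succ i' =>
      have hj : (j : ℕ) < (i' : ℕ) + 1 := by
        simpa [Fin.lt_iff_val_lt_val] using hij
      simp only [hB, Fin.cases_succ, Mmat, Fin.val_succ, Fin.coe_castSucc]
      rw [if_neg (by omega), if_neg (by omega), sub_self]
  have hdiag : ∏ i : Fin (m + 1), B i i
      = (1 - X 0 * X 1 : MvPolynomial (Fin 2) ℤ) ^ m := by
    rw [Fin.prod_univ_succ]
    have h0 : B 0 0 = 1 := by simp [hB, Mmat]
    have hsucc : ∀ i : Fin m, B i.succ i.succ
        = (1 - X 0 * X 1 : MvPolynomial (Fin 2) ℤ) := by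
      intro i
      simp only [hB, Fin.cases_succ, Mmat, Fin.val_succ, Fin.coe_castSucc]
      rw [if_neg (by omega), if_pos (by omega)]
      have : (i : ℕ) + 1 - (i : ℕ) = 1 := by omega
      rw [this, pow_one]
    rw [h0, one_mul]
    calc ∏ i : Fin m, B i.succ i.succ
        = ∏ _i : Fin m, (1 - X 0 * X 1 : MvPolynomial (Fin 2) ℤ) :=
          Finset.prod_congr rfl fun i _ => hsucc i
      _ = (1 - X 0 * X 1 : MvPolynomial (Fin 2) ℤ) ^ m := by
          rw [Finset.prod_const, Finset.card_univ, Fintype.card_fin]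
  rw [hdet, Matrix.det_of_upperTriangular htri, hdiag]

open MvPolynomial in
/-- `∑_σ (−1)^{inv σ} s^{exc σ} t^{depth σ} = (1 − s t)^{n−1}` in `ℤ[s,t]`,
where `s = X 0` and `t = X 1`. -/
theorem sign_imbalance_permutations (n : ℕ) (hn : 1 ≤ n) :
    ∑ σ : Equiv.Perm (Fin n),
        (C ((-1 : ℤ) ^ invN σ) * X 0 ^ excN σ * X 1 ^ depthN σ :
          MvPolynomial (Fin 2) ℤ) =
      (1 - X 0 * X 1) ^ (n - 1) := by
  obtain ⟨m, rfl⟩ : ∃ m, n = m + 1 := ⟨n - 1, by omega⟩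
  rw [sum_eq_det, Matrix.det_transpose, det_Mmat]
  simp
end

section
/- For every permutation σ ∈ 𝔖_n, exc(σ) ≤ depth(σ) ≤ inv(σ). -/
open Finset

theorem key_count {n : ℕ} (σ : Equiv.Perm (Fin n)) (i : Fin n) :
    ((σ i : ℕ) - (i : ℕ)) ≤ (Finset.univ.filter fun j : Fin n => i < j ∧ σ j < σ i).card := by
  have himg : Finset.image σ (Finset.univ.filter fun j : Fin n => σ j < σ i)
      = Finset.univ.filter fun v : Fin n => v < σ i := by
    ext v
    simp only [Finset.mem_image, Finset.mem_filter, Finset.mem_univ, true_and]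
    constructor
    · rintro ⟨j, hj, rfl⟩; exact hj
    · intro hv; exact ⟨σ.symm v, by simpa using hv, by simp⟩
  have hS : (Finset.univ.filter fun j : Fin n => σ j < σ i).card = (σ i : ℕ) := by
    rw [← Finset.card_image_of_injective _ σ.injective, himg]
    have : (Finset.univ.filter fun v : Fin n => v < σ i) = Finset.Iio (σ i) := by
      ext v; simp
    rw [this, Fin.card_Iio]
  have hsub : (Finset.univ.filter fun j : Fin n => σ j < σ i)
      ⊆ Finset.Iio i ∪ (Finset.univ.filter fun j : Fin n => i < j ∧ σ j < σ i) := by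
    intro j hj
    simp only [Finset.mem_filter, Finset.mem_univ, true_and] at hj
    rcases lt_trichotomy j i with h | h | h
    · exact Finset.mem_union_left _ (Finset.mem_Iio.mpr h)
    · exfalso; subst h; exact lt_irrefl _ hj
    · exact Finset.mem_union_right _ (by simp [h, hj])
  have h1 := Finset.card_le_card hsub
  have h2 := Finset.card_union_le (Finset.Iio i)
      (Finset.univ.filter fun j : Fin n => i < j ∧ σ j < σ i)
  rw [hS] at h1
  rw [Fin.card_Iio] at h2
  omega

theorem inv_eq_sum {n : ℕ} (σ : Equiv.Perm (Fin n)) :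
    invN σ = ∑ i : Fin n, (Finset.univ.filter fun j : Fin n => i < j ∧ σ j < σ i).card := by
  unfold invN
  rw [Finset.card_filter]
  rw [Fintype.sum_prod_type]
  congr 1
  ext i
  rw [Finset.card_filter]

/-- `exc σ ≤ depth σ ≤ inv σ` for every permutation `σ`. -/
theorem exc_le_depth_le_inv {n : ℕ} (σ : Equiv.Perm (Fin n)) :
    excN σ ≤ depthN σ ∧ depthN σ ≤ invN σ := by
  constructor
  · unfold excN depthN
    rw [Finset.card_eq_sum_ones]
    apply Finset.sum_le_sum
    intro i hi
    simp only [Finset.mem_filter, Finset.mem_univ, true_and] at hi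
    have : (i : ℕ) < (σ i : ℕ) := hi
    omega
  · calc depthN σ ≤ ∑ i : Fin n, ((σ i : ℕ) - (i : ℕ)) := by
          unfold depthN
          exact Finset.sum_le_sum_of_subset (Finset.filter_subset _ _)
      _ ≤ ∑ i : Fin n, (Finset.univ.filter fun j : Fin n => i < j ∧ σ j < σ i).card :=
          Finset.sum_le_sum fun i _ => key_count σ i
      _ = invN σ := (inv_eq_sum σ).symm
end

section
/- For every n ≥ 1, the polynomial identity Σ_{σ ∈ 𝔖_n} (−1)^{inv(σ)} t^{depth(σ)} = (1 − t)^{n−1} holds (specialization s = 1 of Theorem 1.3). -/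
open Finset Polynomial

private lemma mySignAux_eq_sign {n : ℕ} (σ : Equiv.Perm (Fin n)) :
    Equiv.Perm.signAux σ = Equiv.Perm.sign σ := by
  refine Equiv.Perm.swap_induction_on σ ?_ ?_
  · simp [Equiv.Perm.signAux_one]
  · intro f x y hxy ih
    rw [Equiv.Perm.signAux_mul, Equiv.Perm.sign_mul, ih,
      Equiv.Perm.signAux_swap hxy, Equiv.Perm.sign_swap hxy]

private lemma neg_one_pow_invN {n : ℕ} (σ : Equiv.Perm (Fin n)) :
    ((-1 : ℤ) ^ invN σ) = (Equiv.Perm.sign σ : ℤ) := by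
  rw [← mySignAux_eq_sign]
  unfold Equiv.Perm.signAux
  push_cast
  simp only [apply_ite (fun u : ℤˣ => (u : ℤ)), Units.val_neg, Units.val_one]
  rw [Finset.prod_ite, Finset.prod_const, Finset.prod_const_one, mul_one]
  congr 1
  unfold invN
  refine Finset.card_bij (fun p _ => ⟨p.2, p.1⟩) ?_ ?_ ?_
  · intro p hp
    simp only [mem_filter, mem_univ, true_and] at hp
    simp only [mem_filter, Equiv.Perm.mem_finPairsLT]
    exact ⟨hp.1, hp.2.le⟩
  · intro p hp q hq h
    simp only [Sigma.mk.inj_iff] at h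
    exact Prod.ext (eq_of_heq h.2) h.1
  · intro x hx
    simp only [mem_filter, Equiv.Perm.mem_finPairsLT] at hx
    refine ⟨(x.2, x.1), ?_, rfl⟩
    simp only [mem_filter, mem_univ, true_and]
    exact ⟨hx.1, lt_of_le_of_ne hx.2 (fun h => absurd (σ.injective h) (ne_of_gt hx.1))⟩

private noncomputable def Lmat (n : ℕ) : Matrix (Fin n) (Fin n) (Polynomial ℤ) :=
  fun a k => if (k : ℕ) ≤ (a : ℕ) then
    (if (k : ℕ) = 0 then X ^ (a : ℕ) else (1 - X) * X ^ ((a : ℕ) - (k : ℕ))) else 0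

private noncomputable def Umat (n : ℕ) : Matrix (Fin n) (Fin n) (Polynomial ℤ) :=
  fun k b => if (k : ℕ) ≤ (b : ℕ) then 1 else 0

private lemma key_sum (a m : ℕ) (h : m ≤ a) :
    X ^ a + ∑ j ∈ Finset.range m, (1 - X) * X ^ (a - (j + 1)) =
      (X : Polynomial ℤ) ^ (a - m) := by
  induction m with
  | zero => simp
  | succ m ih =>
    rw [Finset.sum_range_succ, ← add_assoc, ih (by omega)]
    have h2 : a - m = (a - (m + 1)) + 1 := by omega
    rw [h2, pow_succ]; ring

private lemma mul_LU (n : ℕ) (a b : Fin n) :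
    (Lmat n * Umat n) a b = X ^ ((a : ℕ) - (b : ℕ)) := by
  rw [Matrix.mul_apply]
  set m := min (a : ℕ) (b : ℕ) with hm
  have hma : m ≤ a := min_le_left _ _
  set F : ℕ → Polynomial ℤ :=
    fun k => if k = 0 then X ^ (a : ℕ) else (1 - X) * X ^ ((a : ℕ) - k) with hF
  have hcalc : ∀ k : Fin n, Lmat n a k * Umat n k b =
      if (k : ℕ) ≤ m then F (k : ℕ) else 0 := by
    intro k
    unfold Lmat Umat
    rw [hF]
    by_cases hk : (k : ℕ) ≤ m
    · rw [if_pos hk, if_pos (le_trans hk hma), if_pos (le_trans hk (min_le_right _ _)), mul_one]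
    · rw [if_neg hk]
      by_cases h1 : (k : ℕ) ≤ (a : ℕ)
      · have h2 : ¬ (k : ℕ) ≤ (b : ℕ) := by omega
        rw [if_pos h1, if_neg h2, mul_zero]
      · rw [if_neg h1, zero_mul]
  rw [Finset.sum_congr rfl (fun k _ => hcalc k),
    Fin.sum_univ_eq_sum_range (fun k => if k ≤ m then F k else 0) n]
  have hsub : ∑ k ∈ Finset.range n, (if k ≤ m then F k else 0) =
      ∑ k ∈ Finset.range (m + 1), F k := by
    rw [← Finset.sum_filter]
    apply Finset.sum_congr
    · ext k
      simp only [Finset.mem_filter, Finset.mem_range]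
      constructor
      · rintro ⟨_, hk⟩; omega
      · intro hk
        have : m < n := lt_of_le_of_lt hma a.2
        constructor <;> omega
    · intros; rfl
  rw [hsub, Finset.sum_range_succ', hF]
  simp only [if_pos rfl, if_neg (Nat.succ_ne_zero _), if_true]
  rw [add_comm, key_sum (a : ℕ) m hma]
  congr 1
  omega

private lemma det_U (n : ℕ) : (Umat n).det = 1 := by
  have h : (Umat n).BlockTriangular id := by
    intro i j hij
    exact if_neg (by exact_mod_cast not_le.2 hij)
  rw [Matrix.det_of_upperTriangular h]
  refine Finset.prod_eq_one fun i _ => if_pos le_rfl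

private lemma det_L (n : ℕ) (hn : 1 ≤ n) : (Lmat n).det = (1 - X) ^ (n - 1) := by
  have h : (Lmat n).BlockTriangular OrderDual.toDual := by
    intro i j hij
    exact if_neg (by exact_mod_cast not_le.2 hij)
  rw [Matrix.det_of_lowerTriangular _ h]
  have hdiag : ∀ a : Fin n, Lmat n a a = if (a : ℕ) = 0 then 1 else 1 - X := by
    intro a
    unfold Lmat
    rw [if_pos le_rfl]
    by_cases ha : (a : ℕ) = 0
    · rw [if_pos ha, if_pos ha, ha, pow_zero]
    · rw [if_neg ha, if_neg ha, Nat.sub_self, pow_zero, mul_one]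
  obtain ⟨m, rfl⟩ : ∃ m, n = m + 1 := ⟨n - 1, by omega⟩
  rw [Finset.prod_congr rfl (fun a _ => hdiag a), Fin.prod_univ_succ]
  simp only [Fin.val_zero, if_pos rfl, one_mul, Fin.val_succ, Nat.succ_ne_zero,
    if_neg (Nat.succ_ne_zero _), Nat.add_sub_cancel, if_true, if_false, one_mul]
  rw [Finset.prod_const, Finset.card_univ, Fintype.card_fin]

private lemma det_M (n : ℕ) (hn : 1 ≤ n) :
    Matrix.det (Matrix.of fun a b : Fin n => (X : Polynomial ℤ) ^ ((a : ℕ) - (b : ℕ))) =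
      (1 - X) ^ (n - 1) := by
  have hLU : (Matrix.of fun a b : Fin n => (X : Polynomial ℤ) ^ ((a : ℕ) - (b : ℕ))) =
      Lmat n * Umat n := by
    ext a b
    rw [mul_LU]
    rfl
  rw [hLU, Matrix.det_mul, det_U, det_L n hn, mul_one]

open Polynomial in
/-- `∑_σ (−1)^{inv σ} t^{depth σ} = (1 − t)^{n−1}` in `ℤ[t]`. -/
theorem sign_imbalance_depth (n : ℕ) (hn : 1 ≤ n) :
    ∑ σ : Equiv.Perm (Fin n), (C ((-1 : ℤ) ^ invN σ) * X ^ depthN σ : Polynomial ℤ) =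
      (1 - X) ^ (n - 1) := by
  rw [← det_M n hn, Matrix.det_apply]
  refine Finset.sum_congr rfl fun σ _ => ?_
  have hprod : ∏ i : Fin n, (X : Polynomial ℤ) ^ (((σ i : ℕ)) - (i : ℕ)) =
      X ^ depthN σ := by
    rw [Finset.prod_pow_eq_pow_sum]
    congr 1
    unfold depthN
    refine (Finset.sum_subset (Finset.filter_subset _ _) fun i _ hi => ?_).symm
    simp only [Finset.mem_filter, Finset.mem_univ, true_and, not_lt] at hi
    omega
  rw [neg_one_pow_invN σ]
  simp only [Matrix.of_apply, hprod, Units.smul_def, zsmul_eq_mul, Polynomial.C_eq_intCast]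
  norm_cast
end
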